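/- arXiv:0810.5423 — 2 statements merged into one kernel-verified Lean document; each statement's English description precedes it below -/
import Mathlib

section
/- Let g_0(λ) = λ/(1−λ)² on ℝ \ {1}, and define inductively g_{j+1}(λ) = λ · g_j′(λ). Then for every natural number k and every real λ with λ ≠ 0 and λ ≠ 1, one has ((1−λ)^{k+2}/λ) · g_k(λ) = Σ_{i=1}^{k+1} Δ^i 0^{k+1} · (λ−1)^{k+1−i}; that is, the Euler polynomial E_k(λ) = ((1−λ)^{k+2}/λ)·D^k(λ/(1−λ)²) (with D = λ d/dλ) coincides with the polynomial P_k(λ) = (λ−1)^{k+1} Σ_{i=1}^{k+1} Δ^i 0^{k+1}/(λ−1)^i. -/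
/-- The `i`-th forward finite difference of the function `γ ↦ γ^k` evaluated at the
point `a`, i.e. `Δ^i a^k = ∑_{j=0}^{i} (-1)^(i-j) C(i,j) (a+j)^k` (with `0^0 = 1`). -/
noncomputable def finDiff (i k : ℕ) (a : ℝ) : ℝ :=
  ∑ j ∈ Finset.range (i + 1), (-1 : ℝ) ^ (i - j) * (i.choose j : ℝ) * (a + (j : ℝ)) ^ k

lemma finDiff_eq (i k : ℕ) (a : ℝ) :
    finDiff i k a = (fwdDiff (1:ℝ))^[i] (fun x => x ^ k) a := by
  rw [fwdDiff_iter_eq_sum_shift, finDiff]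
  refine Finset.sum_congr rfl fun j _ => ?_
  push_cast [zsmul_eq_mul]
  ring

lemma finDiff_step (i k : ℕ) (a : ℝ) :
    finDiff (i+1) k a = finDiff i k (a+1) - finDiff i k a := by
  simp only [finDiff_eq, Function.iterate_succ_apply', fwdDiff]

lemma fwd_pow_eq_zero (m : ℕ) : ∀ j < m, ∀ a : ℝ, (fwdDiff (1:ℝ))^[m] (fun x => x ^ j) a = 0 := by
  induction m with
  | zero => omega
  | succ m IH =>
    intro j hj a
    rw [Function.iterate_succ_apply]
    have hfd : fwdDiff (1:ℝ) (fun x => x ^ j)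
        = fun x => ∑ r ∈ Finset.range j, (j.choose r : ℝ) * x ^ r := by
      funext x
      rw [fwdDiff, add_pow, Finset.sum_range_succ]
      simp [mul_comm]
    rw [hfd]
    have : (fun x : ℝ => ∑ r ∈ Finset.range j, (j.choose r : ℝ) * x ^ r)
        = ∑ r ∈ Finset.range j, (fun x : ℝ => (j.choose r : ℝ) * x ^ r) := by
      funext x; simp
    rw [this, fwdDiff_iter_finset_sum, Finset.sum_apply]
    refine Finset.sum_eq_zero fun r hr => ?_
    have hr' : r < m := lt_of_lt_of_le (Finset.mem_range.1 hr) (by omega)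
    have : (fun x : ℝ => (j.choose r : ℝ) * x ^ r)
        = (j.choose r : ℝ) • (fun x : ℝ => x ^ r) := by funext x; simp
    rw [this, fwdDiff_iter_const_smul, Pi.smul_apply, IH r hr' a, smul_zero]

lemma finDiff_top (m : ℕ) : finDiff (m+1) m 0 = 0 := by
  rw [finDiff_eq]; exact fwd_pow_eq_zero (m+1) m (by omega) 0

lemma finDiff_rec (j m : ℕ) :
    finDiff (j+1) (m+1) 0 = (j+1) * (finDiff (j+1) m 0 + finDiff j m 0) := by
  have h1 : finDiff j m 1 = finDiff (j+1) m 0 + finDiff j m 0 := by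
    have := finDiff_step j m 0
    rw [zero_add] at this; linarith
  rw [← h1, finDiff, Finset.sum_range_succ', finDiff, Finset.mul_sum]
  have h0 : ((0:ℝ) + (0:ℕ)) ^ (m+1) = 0 := by norm_num
  rw [h0, mul_zero, add_zero]
  refine Finset.sum_congr rfl fun i hi => ?_
  have hc : ((j+1).choose (i+1) : ℝ) * (i+1) = (j+1) * (j.choose i : ℝ) := by
    exact_mod_cast congrArg (Nat.cast (R := ℝ)) (Nat.add_one_mul_choose_eq j i).symm
  have he : (j + 1) - (i + 1) = j - i := by omega
  rw [he]
  have hp : ((0:ℝ) + ((i:ℝ)+1)) ^ (m+1) = ((1:ℝ) + i) ^ m * ((i:ℝ)+1) := by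
    rw [zero_add, pow_succ]; ring_nf
  push_cast
  push_cast at hc
  rw [hp]
  linear_combination ((-1:ℝ))^(j-i) * ((1:ℝ)+i)^m * hc

/-- The Euler polynomial as a finite sum over `range`. -/
noncomputable def eulerP (k : ℕ) (x : ℝ) : ℝ :=
  ∑ t ∈ Finset.range (k+1), finDiff (1+t) (k+1) 0 * (x-1) ^ (k-t)

noncomputable def eulerP' (k : ℕ) (x : ℝ) : ℝ :=
  ∑ t ∈ Finset.range (k+1), finDiff (1+t) (k+1) 0 * (((k-t : ℕ) : ℝ) * (x-1) ^ (k-t-1))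

lemma hasDerivAt_eulerP (k : ℕ) (x : ℝ) : HasDerivAt (eulerP k) (eulerP' k x) x := by
  have : HasDerivAt (eulerP k)
      (∑ t ∈ Finset.range (k+1),
        finDiff (1+t) (k+1) 0 * (((k-t : ℕ) : ℝ) * (x-1) ^ (k-t-1) * 1)) x := by
    apply HasDerivAt.fun_sum
    intro t _
    exact (((hasDerivAt_id x).sub_const 1).pow (k-t)).const_mul _
  simpa [eulerP'] using this

lemma poly_rec (k : ℕ) (x : ℝ) :
    eulerP (k+1) x = (1-x) * (eulerP k x + x * eulerP' k x) + ((k:ℝ)+2) * x * eulerP k x := by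
  have hL : eulerP (k+1) x = ∑ t ∈ Finset.range (k+1),
      finDiff (1+t) (k+1) 0 * (((t:ℝ)+2) * (x-1)^(k-t) + ((t:ℝ)+1) * (x-1)^(k+1-t)) := by
    unfold eulerP
    have hterm : ∀ t, finDiff (1+t) (k+2) 0 * (x-1)^(k+1-t)
        = ((t:ℝ)+1) * finDiff (t+1) (k+1) 0 * (x-1)^(k+1-t)
          + ((t:ℝ)+1) * finDiff t (k+1) 0 * (x-1)^(k+1-t) := by
      intro t
      rw [add_comm 1 t, show finDiff (t+1) (k+1+1) 0
        = ((t:ℝ)+1) * (finDiff (t+1) (k+1) 0 + finDiff t (k+1) 0) by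
          exact_mod_cast finDiff_rec t (k+1)]
      ring
    have hA : (∑ t ∈ Finset.range (k+1+1), ((t:ℝ)+1) * finDiff (t+1) (k+1) 0 * (x-1)^(k+1-t))
        = ∑ t ∈ Finset.range (k+1), ((t:ℝ)+1) * finDiff (t+1) (k+1) 0 * (x-1)^(k+1-t) := by
      rw [Finset.sum_range_succ, finDiff_top (k+1)]
      simp
    have hB : (∑ t ∈ Finset.range (k+1+1), ((t:ℝ)+1) * finDiff t (k+1) 0 * (x-1)^(k+1-t))
        = ∑ t ∈ Finset.range (k+1), ((t:ℝ)+2) * finDiff (t+1) (k+1) 0 * (x-1)^(k+1-(t+1)) := by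
      rw [Finset.sum_range_succ']
      have h0 : finDiff 0 (k+1) 0 = 0 := by simp [finDiff]
      rw [h0]
      push_cast
      ring_nf
    rw [Finset.sum_congr rfl (fun t _ => hterm t), Finset.sum_add_distrib, hA, hB,
      ← Finset.sum_add_distrib]
    refine Finset.sum_congr rfl fun t ht => ?_
    have h1 : k + 1 - (t+1) = k - t := by omega
    rw [h1, add_comm 1 t]
    ring
  rw [hL]
  have hR : (1-x) * (eulerP k x + x * eulerP' k x) + ((k:ℝ)+2) * x * eulerP k x
      = ∑ t ∈ Finset.range (k+1),
        ((1-x) * (finDiff (1+t) (k+1) 0 * (x-1)^(k-t)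
            + x * (finDiff (1+t) (k+1) 0 * (((k-t : ℕ) : ℝ) * (x-1)^(k-t-1))))
          + ((k:ℝ)+2) * x * (finDiff (1+t) (k+1) 0 * (x-1)^(k-t))) := by
    simp only [eulerP, eulerP', Finset.mul_sum, ← Finset.sum_add_distrib]
  rw [hR]
  refine Finset.sum_congr rfl fun t ht => ?_
  have ht' : t ≤ k := by have := Finset.mem_range.1 ht; omega
  rcases eq_or_lt_of_le ht' with h | h
  · subst h
    simp only [Nat.sub_self, show t+1-t = 1 from by omega, show t-t-1 = 0 from by omega]
    push_cast; ring
  · obtain ⟨s, hs⟩ : ∃ s, k = t + s + 1 := ⟨k - t - 1, by omega⟩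
    subst hs
    simp only [show t+s+1-t = s+1 from by omega, show t+s+1+1-t = s+2 from by omega,
      show t+s+1-t-1 = s from by omega]
    push_cast; ring

lemma main_form (g : ℕ → ℝ → ℝ)
    (hg0 : ∀ x : ℝ, g 0 x = x / (1 - x) ^ 2)
    (hgrec : ∀ (j : ℕ) (x : ℝ), g (j + 1) x = x * deriv (g j) x)
    (k : ℕ) : ∀ x : ℝ, x ≠ 1 → g k x = x * eulerP k x / (1-x)^(k+2) := by
  induction k with
  | zero =>
    intro x hx
    rw [hg0]
    have h1 : eulerP 0 x = 1 := by
      norm_num [eulerP, finDiff, Finset.sum_range_succ]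
    rw [h1, mul_one]
  | succ k IH =>
    intro x hx
    rw [hgrec]
    have hopen : {y : ℝ | y ≠ 1} ∈ nhds x := isOpen_ne.mem_nhds hx
    have hev : g k =ᶠ[nhds x] fun y => y * eulerP k y / (1-y)^(k+2) :=
      Filter.eventually_of_mem hopen fun y hy => IH y hy
    rw [hev.deriv_eq]
    have h1x : (1:ℝ) - x ≠ 0 := fun h => hx (by linarith [sub_eq_zero.1 h])
    have hden : HasDerivAt (fun y : ℝ => (1-y)^(k+2))
        (((k:ℝ)+2) * (1-x)^(k+1) * (0-1)) x := by
      have := ((hasDerivAt_const x (1:ℝ)).fun_sub (hasDerivAt_id x)).fun_pow (k+2)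
      simpa using this
    have hnum : HasDerivAt (fun y : ℝ => y * eulerP k y)
        (1 * eulerP k x + x * eulerP' k x) x :=
      (hasDerivAt_id x).mul (hasDerivAt_eulerP k x)
    have hdiv := hnum.fun_div hden (pow_ne_zero _ h1x)
    rw [hdiv.deriv, poly_rec k x]
    field_simp
    ring

lemma sum_Icc_eulerP (k : ℕ) (l : ℝ) :
    ∑ i ∈ Finset.Icc 1 (k + 1), finDiff i (k + 1) 0 * (l - 1) ^ (k + 1 - i)
      = eulerP k l := by
  rw [eulerP, ← Finset.Ico_add_one_right_eq_Icc, Finset.sum_Ico_eq_sum_range]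
  refine Finset.sum_congr (by norm_num) fun t ht => ?_
  have : k + 1 - (1 + t) = k - t := by omega
  rw [this]


/-- Let `g 0 (λ) = λ/(1-λ)²` and `g (j+1) (λ) = λ * (g j)'(λ)`.  Then for every natural
`k` and every real `λ ∉ {0, 1}` one has
`((1-λ)^(k+2)/λ) * g k λ = ∑_{i=1}^{k+1} Δ^i 0^{k+1} (λ-1)^{k+1-i}`,
i.e. the Euler polynomial `E_k(λ) = ((1-λ)^{k+2}/λ) D^k (λ/(1-λ)²)` (with `D = λ d/dλ`)
coincides with the polynomial `P_k(λ) = (λ-1)^{k+1} ∑_{i=1}^{k+1} Δ^i 0^{k+1}/(λ-1)^i`. -/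
theorem euler_poly_eq (g : ℕ → ℝ → ℝ)
    (hg0 : ∀ x : ℝ, g 0 x = x / (1 - x) ^ 2)
    (hgrec : ∀ (j : ℕ) (x : ℝ), g (j + 1) x = x * deriv (g j) x)
    (k : ℕ) (l : ℝ) (hl0 : l ≠ 0) (hl1 : l ≠ 1) :
    (1 - l) ^ (k + 2) / l * g k l =
      ∑ i ∈ Finset.Icc 1 (k + 1), finDiff i (k + 1) 0 * (l - 1) ^ (k + 1 - i) := by
  rw [sum_Icc_eulerP, main_form g hg0 hgrec k l hl1]
  have h1l : (1:ℝ) - l ≠ 0 := fun h => hl1 (by linarith [sub_eq_zero.1 h])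
  field_simp
end

section
/- Let m ≥ 2 be an integer, h > 0, and let λ be a real number with |λ| < e^{−h} that is a root of the polynomial P_{2m−2}, where P_{2m−2}(λ) = (1−e^{2h})(1−λ)^{2m−2} − 2(λ(e^{2h}+1) − e^{h}(λ²+1)) · Σ_{j=1}^{m−1} (h^{2j−1}/(2j−1)!) · (1−λ)^{2m−2−2j} · E_{2j−2}(λ). Then Σ_{γ=1}^{∞} λ^γ ψ_m(hγ) = 0. -/
open Finset fwdDiff


/-- The `i`-th forward finite difference of the function `γ ↦ γ^k` evaluated at `0`,
i.e. `Δ^i 0^k = ∑_{j=0}^{i} (-1)^(i-j) C(i,j) j^k` (with `0^0 = 1`). -/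
noncomputable def finDiff0 (i k : ℕ) : ℝ :=
  ∑ j ∈ Finset.range (i + 1), (-1 : ℝ) ^ (i - j) * (i.choose j : ℝ) * (j : ℝ) ^ k

/-- The Euler polynomial of degree `k`:
`E_k(λ) = ∑_{i=1}^{k+1} Δ^i 0^{k+1} (λ-1)^{k+1-i}`. -/
noncomputable def eulerE (k : ℕ) (x : ℝ) : ℝ :=
  ∑ i ∈ Finset.Icc 1 (k + 1), finDiff0 i (k + 1) * (x - 1) ^ (k + 1 - i)

/-- `ψ_m(x) = (sign x)/2 · ((e^x - e^{-x})/2 - ∑_{k=1}^{m-1} x^{2k-1}/(2k-1)!)`, the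
fundamental solution of `d^{2m}/dx^{2m} - d^{2m-2}/dx^{2m-2}`. -/
noncomputable def psiM (m : ℕ) (x : ℝ) : ℝ :=
  Real.sign x / 2 *
    ((Real.exp x - Real.exp (-x)) / 2 -
      ∑ k ∈ Finset.Icc 1 (m - 1), x ^ (2 * k - 1) / (Nat.factorial (2 * k - 1) : ℝ))

/-- The polynomial `P_{2m-2}(λ) = (1-e^{2h})(1-λ)^{2m-2}
  - 2(λ(e^{2h}+1) - e^h(λ²+1)) ∑_{j=1}^{m-1} (h^{2j-1}/(2j-1)!) (1-λ)^{2m-2-2j} E_{2j-2}(λ)`. -/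
noncomputable def Ppoly (m : ℕ) (h x : ℝ) : ℝ :=
  (1 - Real.exp (2 * h)) * (1 - x) ^ (2 * m - 2) -
    2 * (x * (Real.exp (2 * h) + 1) - Real.exp h * (x ^ 2 + 1)) *
      ∑ j ∈ Finset.Icc 1 (m - 1),
        h ^ (2 * j - 1) / (Nat.factorial (2 * j - 1) : ℝ) *
          (1 - x) ^ (2 * m - 2 - 2 * j) * eulerE (2 * j - 2) x

lemma finDiff0_eq_fwdDiff (i k : ℕ) :
    finDiff0 i k = (Δ_[(1:ℕ)])^[i] (fun x : ℕ => (x : ℝ) ^ k) 0 := by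
  rw [fwdDiff_iter_eq_sum_shift]
  simp [finDiff0, zsmul_eq_mul, mul_assoc]

lemma fwdDiff_pow_vanish (n : ℕ) : ∀ i, n < i → ∀ y : ℕ,
    (Δ_[(1:ℕ)])^[i] (fun x : ℕ => (x : ℝ) ^ n) y = 0 := by
  induction n using Nat.strong_induction_on with
  | _ n IH =>
    intro i hi y
    obtain ⟨j, rfl⟩ : ∃ j, i = j + 1 := ⟨i - 1, by omega⟩
    rw [Function.iterate_succ_apply]
    have hΔ : Δ_[1] (fun x : ℕ => (x : ℝ) ^ n)
        = ∑ t ∈ Finset.range n, (fun x : ℕ => ((n.choose t : ℝ)) * (x : ℝ) ^ t) := by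
      funext x
      simp only [fwdDiff, Finset.sum_apply]
      rw [Nat.cast_add, Nat.cast_one, add_pow]
      rw [Finset.sum_range_succ]
      simp [mul_comm]
    rw [hΔ, fwdDiff_iter_finset_sum]
    rw [Finset.sum_apply]
    apply Finset.sum_eq_zero
    intro t ht
    simp only [Finset.mem_range] at ht
    have : (fun x : ℕ => ((n.choose t : ℝ)) * (x : ℝ) ^ t)
        = (n.choose t : ℝ) • (fun x : ℕ => (x : ℝ) ^ t) := by
      funext x; simp
    rw [this, fwdDiff_iter_const_smul]
    have := IH t ht j (by omega) y
    simp [this]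

lemma finDiff0_eq_zero {i k : ℕ} (h : k < i) : finDiff0 i k = 0 := by
  rw [finDiff0_eq_fwdDiff]; exact fwdDiff_pow_vanish k i h 0

lemma newton_nat (γ n : ℕ) :
    (γ : ℝ) ^ n = ∑ i ∈ Finset.range (γ + 1), (γ.choose i : ℝ) * finDiff0 i n := by
  have := shift_eq_sum_fwdDiff_iter (1 : ℕ) (fun x : ℕ => (x : ℝ) ^ n) γ 0
  simp only [zero_add, smul_eq_mul, nsmul_eq_mul, mul_one] at this
  rw [this]
  exact Finset.sum_congr rfl fun i _ => by rw [finDiff0_eq_fwdDiff]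

lemma newton_trim (γ n : ℕ) :
    (γ : ℝ) ^ n = ∑ i ∈ Finset.range (n + 1), finDiff0 i n * (γ.choose i : ℝ) := by
  have h1 : ∑ i ∈ Finset.range (n + 1), finDiff0 i n * (γ.choose i : ℝ)
      = ∑ i ∈ Finset.range (max n γ + 1), finDiff0 i n * (γ.choose i : ℝ) := by
    apply Finset.sum_subset
    · exact Finset.range_subset_range.2 (by omega)
    · intro i _ hi
      simp only [Finset.mem_range] at hi ⊢
      rw [finDiff0_eq_zero (by omega), zero_mul]
  have h2 : ∑ i ∈ Finset.range (γ + 1), (γ.choose i : ℝ) * finDiff0 i n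
      = ∑ i ∈ Finset.range (max n γ + 1), finDiff0 i n * (γ.choose i : ℝ) := by
    rw [Finset.sum_congr rfl (fun i _ => mul_comm _ _)]
    apply Finset.sum_subset
    · exact Finset.range_subset_range.2 (by omega)
    · intro i _ hi
      simp only [Finset.mem_range] at hi ⊢
      rw [Nat.choose_eq_zero_of_lt (by omega), Nat.cast_zero, mul_zero]
  rw [h1, ← h2, newton_nat]

open Polynomial in
lemma poly_newton (n : ℕ) :
    (Polynomial.X : ℝ[X]) ^ n
      = ∑ i ∈ Finset.range (n + 1), Polynomial.C (finDiff0 i n / i.factorial)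
          * descPochhammer ℝ i := by
  apply eq_of_infinite_eval_eq
  apply Set.Infinite.mono (s := Set.range ((↑) : ℕ → ℝ))
  · rintro _ ⟨γ, rfl⟩
    simp only [Set.mem_setOf_eq, eval_pow, eval_X, eval_finset_sum, eval_mul, eval_C]
    rw [newton_trim γ n]
    apply Finset.sum_congr rfl
    intro i _
    rw [descPochhammer_eval_eq_descFactorial, Nat.descFactorial_eq_factorial_mul_choose]
    have : (i.factorial : ℝ) ≠ 0 := Nat.cast_ne_zero.2 i.factorial_ne_zero
    push_cast
    field_simp
  · exact Set.infinite_range_of_injective Nat.cast_injective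

lemma key_identity (γ n : ℕ) :
    ((γ : ℝ) + 1) ^ n = ∑ i ∈ Finset.range (n + 1),
      (-1 : ℝ) ^ n * (-1) ^ i * finDiff0 i n * (((γ + i).choose i : ℝ)) := by
  have := congrArg (Polynomial.eval (-(1 + (γ : ℝ)))) (poly_newton n)
  simp only [Polynomial.eval_pow, Polynomial.eval_X, Polynomial.eval_finset_sum,
    Polynomial.eval_mul, Polynomial.eval_C] at this
  have hL : (-(1 + (γ : ℝ))) ^ n = (-1) ^ n * ((γ : ℝ) + 1) ^ n := by
    rw [← neg_one_mul, mul_pow]; ring_nf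
  rw [hL] at this
  have hR : ∀ i ∈ Finset.range (n + 1),
      finDiff0 i n / i.factorial * (descPochhammer ℝ i).eval (-(1 + (γ : ℝ)))
        = (-1) ^ i * finDiff0 i n * (((γ + i).choose i : ℝ)) := by
    intro i _
    rw [descPochhammer_eval_eq_ascPochhammer]
    have harg : -(1 + (γ : ℝ)) - i + 1 = -((γ : ℝ) + i) := by ring
    rw [harg, ascPochhammer_eval_neg_eq_descPochhammer]
    rw [show ((γ : ℝ) + i) = (((γ + i : ℕ) : ℝ)) by push_cast; ring]
    rw [descPochhammer_eval_eq_descFactorial, Nat.descFactorial_eq_factorial_mul_choose]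
    have : (i.factorial : ℝ) ≠ 0 := Nat.cast_ne_zero.2 i.factorial_ne_zero
    push_cast
    field_simp
  rw [Finset.sum_congr rfl hR] at this
  have hsgn := congrArg (fun z => (-1 : ℝ) ^ n * z) this
  rw [← mul_assoc, ← mul_pow, neg_one_mul, neg_neg, one_pow, one_mul, Finset.mul_sum] at hsgn
  rw [hsgn]
  exact Finset.sum_congr rfl fun i _ => by ring

lemma hasSum_pow_succ_mul_geometric (n : ℕ) {x : ℝ} (hx : |x| < 1) :
    HasSum (fun γ : ℕ => ((γ : ℝ) + 1) ^ n * x ^ γ)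
      (∑ i ∈ Finset.range (n + 1),
        (-1 : ℝ) ^ n * (-1) ^ i * finDiff0 i n * (1 / (1 - x) ^ (i + 1))) := by
  have hx' : ‖x‖ < 1 := by rwa [Real.norm_eq_abs]
  have h1 : ∀ i, HasSum (fun γ : ℕ =>
      (-1 : ℝ) ^ n * (-1) ^ i * finDiff0 i n * ((((γ + i).choose i : ℝ)) * x ^ γ))
      ((-1 : ℝ) ^ n * (-1) ^ i * finDiff0 i n * (1 / (1 - x) ^ (i + 1))) := by
    intro i
    exact (hasSum_choose_mul_geometric_of_norm_lt_one i hx').mul_left _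
  have h2 := hasSum_sum (s := Finset.range (n + 1))
      (f := fun i (γ : ℕ) =>
        (-1 : ℝ) ^ n * (-1) ^ i * finDiff0 i n * ((((γ + i).choose i : ℝ)) * x ^ γ))
      (a := fun i => (-1 : ℝ) ^ n * (-1) ^ i * finDiff0 i n * (1 / (1 - x) ^ (i + 1)))
      (fun i _ => h1 i)
  convert h2 using 2 with γ
  rw [key_identity γ n, Finset.sum_mul]
  exact Finset.sum_congr rfl fun i _ => by ring

lemma value_eq_eulerE (k : ℕ) (hk : 1 ≤ k) {x : ℝ} (hx1 : x ≠ 1) :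
    ∑ i ∈ Finset.range (2 * k - 1 + 1),
        (-1 : ℝ) ^ (2 * k - 1) * (-1) ^ i * finDiff0 i (2 * k - 1) * (1 / (1 - x) ^ (i + 1))
      = eulerE (2 * k - 2) x / (1 - x) ^ (2 * k) := by
  set n := 2 * k - 1 with hn
  have hn1 : 1 ≤ n := by omega
  have hxne : (1 : ℝ) - x ≠ 0 := sub_ne_zero.2 (Ne.symm hx1)
  have hE : eulerE (2 * k - 2) x
      = ∑ i ∈ Finset.range (n + 1), finDiff0 i n * (x - 1) ^ (n - i) := by
    rw [eulerE, show 2 * k - 2 + 1 = n by omega]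
    apply Finset.sum_subset
    · intro i hi
      simp only [Finset.mem_Icc] at hi
      simp only [Finset.mem_range]
      omega
    · intro i hi hni
      simp only [Finset.mem_range] at hi
      simp only [Finset.mem_Icc] at hni
      have : i = 0 := by omega
      subst this
      have : finDiff0 0 n = 0 := by
        simp [finDiff0, zero_pow (by omega : n ≠ 0)]
      rw [this, zero_mul]
  rw [hE, Finset.sum_div]
  apply Finset.sum_congr rfl
  intro i hi
  simp only [Finset.mem_range] at hi
  have hin : i ≤ n := by omega
  have hsplit : (1 - x) ^ (2 * k) = (1 - x) ^ (n - i) * (1 - x) ^ (i + 1) := by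
    rw [← pow_add]
    congr 1
    omega
  have hneg : (x - 1) ^ (n - i) = (-1 : ℝ) ^ (n - i) * (1 - x) ^ (n - i) := by
    rw [show x - 1 = -1 * (1 - x) by ring, mul_pow]
  have hsgn : (-1 : ℝ) ^ (n - i) = (-1) ^ n * (-1) ^ i := by
    have h0 : (-1 : ℝ) ^ (n - i) * (-1) ^ i = (-1) ^ n := by
      rw [← pow_add]; congr 1; omega
    have h1 : ((-1 : ℝ) ^ i) * ((-1) ^ i) = 1 := by
      rw [← mul_pow]; norm_num
    calc (-1 : ℝ) ^ (n - i) = (-1) ^ (n - i) * ((-1) ^ i * (-1) ^ i) := by rw [h1, mul_one]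
      _ = (-1) ^ n * (-1) ^ i := by rw [← mul_assoc, h0]
  rw [hneg, hsgn, hsplit]
  field_simp
lemma main_alg (E l s p : ℝ) (hE : E ≠ 0) (hd1 : 1 - l * E ≠ 0) (hd2 : 1 - l * E⁻¹ ≠ 0)
    (hp : p ≠ 0) (hroot : (1 - E ^ 2) * p - 2 * (l * (E ^ 2 + 1) - E * (l ^ 2 + 1)) * s = 0) :
    1 / 4 * (l * E / (1 - l * E) - l * E⁻¹ / (1 - l * E⁻¹)) - 1 / 2 * (l * s / p) = 0 := by
  have hd2' : E - l ≠ 0 := by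
    intro hc; apply hd2; field_simp; linarith [hc]
  field_simp
  ring_nf
  linear_combination (-2*l) * hroot

lemma hasSum_geom_succ {r : ℝ} (hr : |r| < 1) :
    HasSum (fun γ : ℕ => r ^ (γ + 1)) (r / (1 - r)) := by
  have := (hasSum_geometric_of_norm_lt_one (by rwa [Real.norm_eq_abs] : ‖r‖ < 1)).mul_left r
  rw [div_eq_mul_inv]
  convert this using 2 with γ
  case e'_3 => rfl
  rw [pow_succ]
  ring

/-- Let `m ≥ 2`, `h > 0` and `|λ| < e^{-h}` be a root of `P_{2m-2}`.  Then
`∑_{γ=1}^{∞} λ^γ ψ_m(hγ) = 0`. -/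
theorem hasSum_pow_mul_psiM_root (m : ℕ) (hm : 2 ≤ m) (h : ℝ) (hh : 0 < h)
    (l : ℝ) (hl : |l| < Real.exp (-h)) (hroot : Ppoly m h l = 0) :
    HasSum (fun γ : ℕ => l ^ (γ + 1) * psiM m (h * ((γ : ℝ) + 1))) 0 := by
  set E := Real.exp h with hE
  have hEpos : 0 < E := Real.exp_pos h
  have hEinv : Real.exp (-h) = E⁻¹ := Real.exp_neg h
  have hE2 : Real.exp (2 * h) = E ^ 2 := by rw [two_mul, Real.exp_add, sq]
  have hEgt : 1 < E := by
    rw [hE, show (1 : ℝ) = Real.exp 0 by simp]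
    exact Real.exp_lt_exp.mpr hh
  have hEinvlt : E⁻¹ < 1 := inv_lt_one_of_one_lt₀ hEgt
  have hl1 : |l| < 1 := lt_trans (hEinv ▸ hl) hEinvlt
  have hlne1 : l ≠ 1 := by intro hc; rw [hc] at hl1; simp at hl1
  have hlE : |l * E| < 1 := by
    rw [abs_mul, abs_of_pos hEpos]
    calc |l| * E < E⁻¹ * E := by
          apply mul_lt_mul_of_pos_right _ hEpos
          rwa [hEinv] at hl
      _ = 1 := inv_mul_cancel₀ hEpos.ne'
  have hlE' : |l * E⁻¹| < 1 := by
    rw [abs_mul, abs_of_pos (inv_pos.2 hEpos)]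
    calc |l| * E⁻¹ < 1 * 1 := by
          apply mul_lt_mul' hl1.le hEinvlt (by positivity) one_pos
      _ = 1 := one_mul 1
  -- the three HasSum pieces
  have H1 : HasSum (fun γ : ℕ => (l * E) ^ (γ + 1)) (l * E / (1 - l * E)) :=
    hasSum_geom_succ hlE
  have H2 : HasSum (fun γ : ℕ => (l * E⁻¹) ^ (γ + 1)) (l * E⁻¹ / (1 - l * E⁻¹)) :=
    hasSum_geom_succ hlE'
  have H3 : HasSum
      (fun γ : ℕ => ∑ k ∈ Finset.Icc 1 (m - 1),
        h ^ (2 * k - 1) / ((2 * k - 1).factorial : ℝ) * l * (((γ : ℝ) + 1) ^ (2 * k - 1) * l ^ γ))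
      (∑ k ∈ Finset.Icc 1 (m - 1),
        h ^ (2 * k - 1) / ((2 * k - 1).factorial : ℝ) * l *
          (eulerE (2 * k - 2) l / (1 - l) ^ (2 * k))) := by
    apply hasSum_sum
    intro k hk
    have hk1 : 1 ≤ k := (Finset.mem_Icc.1 hk).1
    have := hasSum_pow_succ_mul_geometric (2 * k - 1) hl1
    rw [value_eq_eulerE k hk1 hlne1] at this
    exact this.mul_left _
  have Hcomb := ((H1.sub H2).mul_left (1 / 4)).sub (H3.mul_left (1 / 2))
  -- identify the function
  have hfun : (fun γ : ℕ => 1 / 4 * ((l * E) ^ (γ + 1) - (l * E⁻¹) ^ (γ + 1)) -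
      1 / 2 * ∑ k ∈ Finset.Icc 1 (m - 1),
        h ^ (2 * k - 1) / ((2 * k - 1).factorial : ℝ) * l * (((γ : ℝ) + 1) ^ (2 * k - 1) * l ^ γ))
      = fun γ : ℕ => l ^ (γ + 1) * psiM m (h * ((γ : ℝ) + 1)) := by
    funext γ
    have hx0 : 0 < h * ((γ : ℝ) + 1) := by positivity
    rw [psiM, Real.sign_of_pos hx0]
    have he1 : Real.exp (h * ((γ : ℝ) + 1)) = E ^ (γ + 1) := by
      rw [hE, ← Real.exp_nat_mul]
      congr 1
      push_cast
      ring
    have he2 : Real.exp (-(h * ((γ : ℝ) + 1))) = (E⁻¹) ^ (γ + 1) := by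
      rw [Real.exp_neg, he1, inv_pow]
    rw [he1, he2, mul_pow, mul_pow]
    have hsum2 : ∑ k ∈ Finset.Icc 1 (m - 1),
        (h * ((γ : ℝ) + 1)) ^ (2 * k - 1) / ((2 * k - 1).factorial : ℝ)
        = ∑ k ∈ Finset.Icc 1 (m - 1),
          h ^ (2 * k - 1) * ((γ : ℝ) + 1) ^ (2 * k - 1) / ((2 * k - 1).factorial : ℝ) := by
      exact Finset.sum_congr rfl fun k _ => by rw [mul_pow]
    have hsum1 : ∑ k ∈ Finset.Icc 1 (m - 1),
        h ^ (2 * k - 1) / ((2 * k - 1).factorial : ℝ) * l *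
          (((γ : ℝ) + 1) ^ (2 * k - 1) * l ^ γ)
        = l ^ (γ + 1) * ∑ k ∈ Finset.Icc 1 (m - 1),
          h ^ (2 * k - 1) * ((γ : ℝ) + 1) ^ (2 * k - 1) / ((2 * k - 1).factorial : ℝ) := by
      rw [Finset.mul_sum]
      refine Finset.sum_congr rfl fun k _ => ?_
      rw [pow_succ]
      ring
    rw [hsum2, hsum1]
    ring
  rw [hfun] at Hcomb
  -- identify the value with 0
  convert Hcomb using 1
  case e'_3 => rfl
  symm
  -- algebra
  set s := ∑ j ∈ Finset.Icc 1 (m - 1),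
      h ^ (2 * j - 1) / ((2 * j - 1).factorial : ℝ) *
        (1 - l) ^ (2 * m - 2 - 2 * j) * eulerE (2 * j - 2) l with hs
  have hlsub : (1 : ℝ) - l ≠ 0 := sub_ne_zero.2 (Ne.symm hlne1)
  have hA3 : (∑ k ∈ Finset.Icc 1 (m - 1),
      h ^ (2 * k - 1) / ((2 * k - 1).factorial : ℝ) * l *
        (eulerE (2 * k - 2) l / (1 - l) ^ (2 * k)))
      = l * s / (1 - l) ^ (2 * m - 2) := by
    rw [hs, Finset.mul_sum, Finset.sum_div]
    apply Finset.sum_congr rfl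
    intro k hk
    obtain ⟨hk1, hk2⟩ := Finset.mem_Icc.1 hk
    have hpow : (1 - l) ^ (2 * m - 2) = (1 - l) ^ (2 * m - 2 - 2 * k) * (1 - l) ^ (2 * k) := by
      rw [← pow_add]
      congr 1
      omega
    rw [hpow]
    field_simp
  rw [hA3]
  have hd1 : 1 - l * E ≠ 0 := by
    intro hc
    have : |l * E| = 1 := by rw [show l * E = 1 by linarith]; simp
    rw [this] at hlE; exact lt_irrefl _ hlE
  have hd2 : 1 - l * E⁻¹ ≠ 0 := by
    intro hc
    have : |l * E⁻¹| = 1 := by rw [show l * E⁻¹ = 1 by linarith]; simp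
    rw [this] at hlE'; exact lt_irrefl _ hlE'
  have hp : (1 - l) ^ (2 * m - 2) ≠ 0 := pow_ne_zero _ hlsub
  have hroot' : (1 - E ^ 2) * (1 - l) ^ (2 * m - 2)
      - 2 * (l * (E ^ 2 + 1) - E * (l ^ 2 + 1)) * s = 0 := by
    rw [Ppoly, hE2, ← hE] at hroot
    rw [hs]
    linear_combination hroot
  exact main_alg E l s ((1 - l) ^ (2 * m - 2)) hEpos.ne' hd1 hd2 hp hroot'
end
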